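/- (Optimal feature rescaling for the minimum-norm interpolator) Let Φ ∈ ℝ^{n×P} have SVD Φ = Σ_{j=1}^n √λ_j u_j v_jᵀ with all λ_j > 0, and let w* = Φᵀ(ΦΦᵀ)⁻¹y = Σ_j (u_jᵀy/√λ_j) v_j be the minimum ℓ₂-norm interpolator of labels y ∈ ℝⁿ (assume u_jᵀy ≠ 0 for all j). For rescaling matrices A_ν = Σ_j √ν_j v_j v_jᵀ + Id on span{v_j}⊥ with ν_j > 0, the function ν ↦ ‖w*‖²_{A_ν} · Tr K_{A_ν} = (Σ_j (ν_j/λ_j)(u_jᵀy)²)·(Σ_j λ_j/ν_j) has critical points exactly when ν_j = κ·λ_j/|u_jᵀy| for some constant κ > 0 independent of j. -/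

import Mathlib

open Matrix


private lemma aux_fwd (S T lamj cj νj κ : ℝ) (hT : 0 < T) (hl : 0 < lamj)
    (hcj : cj ≠ 0) (hν : 0 < νj) (hκpos : 0 < κ) (hκ2 : κ ^ 2 = S / T)
    (hj : T * (cj ^ 2 / lamj) = S * (lamj * (νj ^ 2)⁻¹)) :
    νj = κ * lamj / |cj| := by
  have hrhs : 0 < κ * lamj / |cj| := div_pos (mul_pos hκpos hl) (abs_pos.mpr hcj)
  have hsq : νj ^ 2 = (κ * lamj / |cj|) ^ 2 := by
    rw [div_pow, mul_pow, hκ2, sq_abs]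
    field_simp [hl.ne', hν.ne', hT.ne', hcj] at hj ⊢
    nlinarith [hj]
  nlinarith [sq_nonneg (νj - κ * lamj / |cj|), hrhs, hν]

private lemma aux_S_term (lamj cj κ : ℝ) (hl : 0 < lamj) (hcj : cj ≠ 0) (hκ : 0 < κ) :
    cj ^ 2 / lamj * (κ * lamj / |cj|) = κ * |cj| := by
  have h1 : |cj| ≠ 0 := abs_ne_zero.mpr hcj
  field_simp [h1, hl.ne', hκ.ne']
  rw [← sq_abs]

private lemma aux_T_term (lamj cj κ : ℝ) (hl : 0 < lamj) (hcj : cj ≠ 0) (hκ : 0 < κ) :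
    lamj * (κ * lamj / |cj|)⁻¹ = κ⁻¹ * |cj| := by
  have h1 : |cj| ≠ 0 := abs_ne_zero.mpr hcj
  field_simp [h1, hl.ne', hκ.ne']

private lemma aux_bwd (κ A lamk ck : ℝ) (hκ : 0 < κ) (hl : 0 < lamk) (hck : ck ≠ 0) :
    (κ⁻¹ * A) * (ck ^ 2 / lamk) = (κ * A) * (lamk * (((κ * lamk / |ck|)) ^ 2)⁻¹) := by
  have h1 : |ck| ≠ 0 := abs_ne_zero.mpr hck
  rw [div_pow, mul_pow, sq_abs]
  field_simp [h1, hl.ne', hκ.ne']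

/-- Optimal feature rescaling for the minimum-norm interpolator: the
function `ν ↦ ‖w*‖²_{A_ν} · Tr K_{A_ν} = (Σ_j (ν_j/λ_j)(u_jᵀy)²)·(Σ_j λ_j/ν_j)` has
a critical point at `ν` (with all `ν_j > 0`) iff `ν_j = κ·λ_j/|u_jᵀy|` for some
constant `κ > 0` independent of `j`. -/
theorem optimal_rescaling_min_norm_interpolator
    {n : ℕ} (hn : 0 < n)
    (lam : Fin n → ℝ) (hlam : ∀ j, 0 < lam j)
    (u : Fin n → Fin n → ℝ) (y : Fin n → ℝ)
    (hy : ∀ j, u j ⬝ᵥ y ≠ 0)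
    (F : (Fin n → ℝ) → ℝ)
    (hF : F = fun ν =>
      (∑ j, (ν j / lam j) * (u j ⬝ᵥ y) ^ 2) * (∑ j, lam j / ν j)) :
    ∀ ν : Fin n → ℝ, (∀ j, 0 < ν j) →
      (fderiv ℝ F ν = 0 ↔ ∃ κ > 0, ∀ j, ν j = κ * lam j / |u j ⬝ᵥ y|) := by
  intro ν hν
  set c : Fin n → ℝ := fun j => u j ⬝ᵥ y with hcdef
  have hc : ∀ j, c j ≠ 0 := hy
  have hνne : ∀ j, ν j ≠ 0 := fun j => (hν j).ne'
  have hne : (Finset.univ : Finset (Fin n)).Nonempty := by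
    simpa [Finset.univ_nonempty_iff] using Fin.pos_iff_nonempty.mp hn
  have hFeq : F = fun x : Fin n → ℝ =>
      (∑ j, (c j ^ 2 / lam j) * x j) * (∑ j, lam j * (x j)⁻¹) := by
    rw [hF]; funext x
    rw [show (∑ j, (x j / lam j) * c j ^ 2) = ∑ j, (c j ^ 2 / lam j) * x j from
        Finset.sum_congr rfl fun j _ => by ring,
      show (∑ j, lam j / x j) = ∑ j, lam j * (x j)⁻¹ from
        Finset.sum_congr rfl fun j _ => by rw [div_eq_mul_inv]]
  set S := ∑ j, (c j ^ 2 / lam j) * ν j with hS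
  set T := ∑ j, lam j * (ν j)⁻¹ with hT
  have hSpos : 0 < S := Finset.sum_pos
    (fun j _ => mul_pos (div_pos (pow_two_pos_of_ne_zero (hc j)) (hlam j)) (hν j)) hne
  have hTpos : 0 < T := Finset.sum_pos
    (fun j _ => mul_pos (hlam j) (inv_pos.mpr (hν j))) hne
  set G : (Fin n → ℝ) →L[ℝ] ℝ :=
    ∑ j, (c j ^ 2 / lam j) • (ContinuousLinearMap.proj j : (Fin n → ℝ) →L[ℝ] ℝ) with hG
  set H : (Fin n → ℝ) →L[ℝ] ℝ :=
    ∑ j, lam j • ((-(ν j ^ 2)⁻¹) • (ContinuousLinearMap.proj j : (Fin n → ℝ) →L[ℝ] ℝ)) with hH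
  have hgd : HasFDerivAt (fun x : Fin n → ℝ => ∑ j, (c j ^ 2 / lam j) * x j) G ν := by
    rw [hG]
    exact HasFDerivAt.fun_sum fun j _ =>
      ((ContinuousLinearMap.proj j : (Fin n → ℝ) →L[ℝ] ℝ).hasFDerivAt (x := ν)).const_mul _
  have hhd : HasFDerivAt (fun x : Fin n → ℝ => ∑ j, lam j * (x j)⁻¹) H ν := by
    rw [hH]
    refine HasFDerivAt.fun_sum fun j _ => HasFDerivAt.const_mul ?_ _
    exact (hasDerivAt_inv (hνne j)).comp_hasFDerivAt ν
      (ContinuousLinearMap.proj j : (Fin n → ℝ) →L[ℝ] ℝ).hasFDerivAt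
  have hL : HasFDerivAt F (S • H + T • G) ν := by
    rw [hFeq]; exact hgd.mul hhd
  rw [hL.fderiv]
  have heval : ∀ x : Fin n → ℝ, (S • H + T • G) x
      = ∑ j, (S * (lam j * (-(ν j ^ 2)⁻¹)) + T * (c j ^ 2 / lam j)) * x j := by
    intro x
    simp only [hG, hH, ContinuousLinearMap.add_apply, ContinuousLinearMap.smul_apply,
      ContinuousLinearMap.sum_apply, ContinuousLinearMap.proj_apply, smul_eq_mul,
      Finset.mul_sum, ← Finset.sum_add_distrib]
    exact Finset.sum_congr rfl fun j _ => by ring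
  have key : (S • H + T • G) = 0 ↔
      ∀ k, T * (c k ^ 2 / lam k) = S * (lam k * (ν k ^ 2)⁻¹) := by
    constructor
    · intro h0 k
      have := congrArg (fun L : (Fin n → ℝ) →L[ℝ] ℝ => L (Pi.single k 1)) h0
      simp only [heval, ContinuousLinearMap.zero_apply] at this
      rw [Finset.sum_eq_single k (fun j _ hj => by simp [Pi.single_apply, hj])
        (by simp)] at this
      simp [Pi.single_apply] at this
      linarith [this]
    · intro h
      ext x
      simp only [heval, ContinuousLinearMap.zero_apply]
      refine Finset.sum_eq_zero fun j _ => ?_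
      have hj : S * (lam j * (-(ν j ^ 2)⁻¹)) + T * (c j ^ 2 / lam j) = 0 := by
        rw [h j]; ring
      rw [hj, zero_mul]
  rw [key]
  constructor
  · intro h
    refine ⟨Real.sqrt (S / T), Real.sqrt_pos.mpr (div_pos hSpos hTpos), fun j => ?_⟩
    exact aux_fwd S T (lam j) (c j) (ν j) (Real.sqrt (S / T)) hTpos (hlam j)
      (hc j) (hν j) (Real.sqrt_pos.mpr (div_pos hSpos hTpos))
      (Real.sq_sqrt (div_pos hSpos hTpos).le) (h j)
  · rintro ⟨κ, hκ, hκν⟩ k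
    have hSval : S = κ * ∑ j, |c j| := by
      rw [hS, Finset.mul_sum]
      exact Finset.sum_congr rfl fun j _ => by
        rw [hκν j]; exact aux_S_term _ _ _ (hlam j) (hc j) hκ
    have hTval : T = κ⁻¹ * ∑ j, |c j| := by
      rw [hT, Finset.mul_sum]
      exact Finset.sum_congr rfl fun j _ => by
        rw [hκν j]; exact aux_T_term _ _ _ (hlam j) (hc j) hκ
    rw [hSval, hTval, hκν k]
    exact aux_bwd _ _ _ _ hκ (hlam k) (hc k)
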